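/- Let N ≥ 1 be an integer and let A be the complex N×N matrix, with indices n, m running over 1, …, N, defined by A_{n,m} = (i/2)·sign(n − m). Then the set of eigenvalues of A is exactly { (1/2)·cot( π(k + 1/2)/N ) : k = 0, 1, …, N−1 }, and these N real numbers are pairwise distinct. -/

import Mathlib

open Complex Matrix Real

private lemma lattice_eig_sum (θ : ℝ) (r : ℂ) (N n : ℕ) (hn : n < N)
    (hs : Complex.sin θ ≠ 0) (hr1 : r ≠ 1) (hrN : r ^ N = -1)
    (hkey : Complex.I * Complex.sin θ * (1 + r) = Complex.cos θ * (r - 1)) :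
    (Complex.I/2) * (∑ j ∈ Finset.range N,
        (if j < n then (1:ℂ) else if n < j then -1 else 0) * r^j)
      = (((1/2) * Real.cot θ : ℝ) : ℂ) * r^n := by
  have hrsub : r - 1 ≠ 0 := sub_ne_zero.mpr hr1
  have hsplit : (∑ j ∈ Finset.range N, (if j < n then (1:ℂ) else if n < j then -1 else 0) * r^j)
      = (∑ j ∈ Finset.range (n+1), (if j < n then (1:ℂ) else if n < j then -1 else 0) * r^j)
        + ∑ j ∈ Finset.Ico (n+1) N, (if j < n then (1:ℂ) else if n < j then -1 else 0) * r^j :=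
    (Finset.sum_range_add_sum_Ico _ hn).symm
  have S1 : (∑ j ∈ Finset.range n, (if j < n then (1:ℂ) else if n < j then -1 else 0) * r^j)
      = (r^n - 1)/(r-1) := by
    rw [← geom_sum_eq hr1]
    exact Finset.sum_congr rfl fun j hj => by rw [if_pos (Finset.mem_range.mp hj), one_mul]
  have S2 : (∑ j ∈ Finset.Ico (n+1) N, (if j < n then (1:ℂ) else if n < j then -1 else 0) * r^j)
      = -((-1 - r^(n+1))/(r-1)) := by
    have h2 : (∑ j ∈ Finset.Ico (n+1) N, (if j < n then (1:ℂ) else if n < j then -1 else 0) * r^j)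
        = -∑ j ∈ Finset.Ico (n+1) N, r^j := by
      rw [← Finset.sum_neg_distrib]
      refine Finset.sum_congr rfl fun j hj => ?_
      have hj' := (Finset.mem_Ico.mp hj).1
      rw [if_neg (by omega), if_pos (by omega)]
      ring
    rw [h2, geom_sum_Ico hr1 hn, hrN]
  rw [hsplit, Finset.sum_range_succ, S1, S2, if_neg (lt_irrefl n), if_neg (lt_irrefl n),
    Real.cot_eq_cos_div_sin]
  push_cast
  field_simp
  linear_combination (r^n) * hkey

/-- The eigenvalues of the lattice inverse-momentum matrix `A_{n,m} = (i/2) sign(n−m)`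
are exactly the `N` pairwise distinct real numbers `(1/2) cot(π(k+1/2)/N)`,
`k = 0, 1, …, N−1`. -/
theorem lattice_inverse_momentum_spectrum
    (N : ℕ) (hN : 1 ≤ N)
    (A : Matrix (Fin N) (Fin N) ℂ)
    (hA : ∀ n m : Fin N,
      A n m = (Complex.I / 2) *
        (Real.sign ((((n : ℕ) : ℝ) + 1) - (((m : ℕ) : ℝ) + 1)) : ℂ)) :
    {z : ℂ | ∃ ψ : Fin N → ℂ, ψ ≠ 0 ∧ A.mulVec ψ = z • ψ} =
      Set.range (fun k : Fin N =>
        (((1 / 2 : ℝ) * Real.cot (Real.pi * (((k : ℕ) : ℝ) + 1 / 2) / (N : ℝ)) : ℝ) : ℂ)) ∧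
    Function.Injective (fun k : Fin N =>
      (1 / 2 : ℝ) * Real.cot (Real.pi * (((k : ℕ) : ℝ) + 1 / 2) / (N : ℝ))) := by
  have hNR : (0:ℝ) < N := by exact_mod_cast hN
  set θ : Fin N → ℝ := fun k => Real.pi * (((k:ℕ):ℝ) + 1/2) / (N:ℝ) with hθdef
  set zfun : Fin N → ℝ := fun k => (1/2 : ℝ) * Real.cot (θ k) with hzdef
  have hθpos : ∀ k, 0 < θ k := fun k => div_pos (by positivity) hNR
  have hθlt : ∀ k, θ k < Real.pi := by
    intro k
    rw [hθdef]
    simp only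
    rw [div_lt_iff₀ hNR]
    have h1 : ((k:ℕ):ℝ) + 1 ≤ N := by exact_mod_cast k.isLt
    nlinarith [Real.pi_pos]
  have hsin : ∀ k, Real.sin (θ k) ≠ 0 :=
    fun k => (Real.sin_pos_of_pos_of_lt_pi (hθpos k) (hθlt k)).ne'
  have hθinj : Function.Injective θ := by
    intro j k h
    rw [hθdef] at h
    simp only at h
    field_simp [Real.pi_ne_zero] at h
    have h' : ((j:ℕ):ℝ) = ((k:ℕ):ℝ) := by linarith
    exact Fin.ext (by exact_mod_cast h')
  have hinj : Function.Injective zfun := by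
    intro j k h
    apply hθinj
    have hcot : Real.cot (θ j) = Real.cot (θ k) := by
      rw [hzdef] at h; simp only at h; linarith
    rw [Real.cot_eq_cos_div_sin, Real.cot_eq_cos_div_sin,
      div_eq_div_iff (hsin j) (hsin k)] at hcot
    have hsub : Real.sin (θ k - θ j) = 0 := by
      rw [Real.sin_sub]; nlinarith [hcot]
    have h0 : θ k - θ j = 0 := by
      rw [Real.sin_eq_zero_iff_of_lt_of_lt (by linarith [hθpos k, hθlt j])
        (by linarith [hθpos j, hθlt k])] at hsub
      exact hsub
    linarith
  -- each zfun k is an eigenvalue, with explicit eigenvector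
  have hmem : ∀ k : Fin N, ∃ ψ : Fin N → ℂ, ψ ≠ 0 ∧
      A.mulVec ψ = ((zfun k : ℝ) : ℂ) • ψ := by
    intro k
    set r : ℂ := Complex.exp ((2 * θ k : ℝ) * Complex.I) with hrdef
    have hr : r = (Complex.cos (θ k) + Complex.sin (θ k) * Complex.I)^2 := by
      rw [hrdef, ← Complex.exp_mul_I, ← Complex.exp_nat_mul]
      push_cast; ring_nf
    have hkey : Complex.I * Complex.sin (θ k) * (1 + r)
        = Complex.cos (θ k) * (r - 1) := by
      rw [hr]
      linear_combination ((Complex.sin ((θ k:ℝ):ℂ))^2 * (Complex.cos ((θ k:ℝ):ℂ)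
          + Complex.sin ((θ k:ℝ):ℂ) * Complex.I)) * Complex.I_sq
        - (Complex.I * Complex.sin ((θ k:ℝ):ℂ) + Complex.cos ((θ k:ℝ):ℂ))
          * Complex.sin_sq_add_cos_sq ((θ k:ℝ):ℂ)
    have hs : Complex.sin ((θ k:ℝ):ℂ) ≠ 0 := by
      rw [← Complex.ofReal_sin]
      exact_mod_cast hsin k
    have hr1 : r ≠ 1 := by
      rw [hrdef, Ne, Complex.exp_eq_one_iff]
      push_neg
      intro n h
      have him := congrArg Complex.im h
      simp [Complex.mul_im] at him
      have hπ := Real.pi_pos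
      have h1 := hθpos k
      have h2 := hθlt k
      rcases le_or_gt n 0 with hn | hn
      · have : (n:ℝ) ≤ 0 := by exact_mod_cast hn
        nlinarith
      · have : (1:ℝ) ≤ (n:ℝ) := by exact_mod_cast hn
        nlinarith
    have hrN : r ^ N = -1 := by
      rw [hrdef, ← Complex.exp_nat_mul]
      have key : (N:ℂ) * ((2 * θ k : ℝ) * Complex.I)
          = ((2*(k:ℕ)+1) : ℕ) * (Real.pi * Complex.I) := by
        have h2 : (N:ℝ) * (2 * θ k) = ((2*(k:ℕ)+1) : ℕ) * Real.pi := by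
          rw [hθdef]; push_cast; field_simp
        calc (N:ℂ) * ((2 * θ k : ℝ) * Complex.I)
            = (((N:ℝ) * (2 * θ k) : ℝ) : ℂ) * Complex.I := by push_cast; ring
          _ = ((2*(k:ℕ)+1) : ℕ) * (Real.pi * Complex.I) := by rw [h2]; push_cast; ring
      rw [key, Complex.exp_nat_mul, Complex.exp_pi_mul_I]
      exact Odd.neg_one_pow ⟨(k:ℕ), by ring⟩
    refine ⟨fun m => r ^ (m:ℕ), ?_, ?_⟩
    · intro hcontra
      have h0 : r ^ ((⟨0, hN⟩ : Fin N) : ℕ) = 0 := congrFun hcontra ⟨0, hN⟩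
      simp at h0
    · funext n
      have hterm : ∀ m : Fin N, A n m * r ^ (m:ℕ)
          = (Complex.I/2) * ((if (m:ℕ) < (n:ℕ) then (1:ℂ)
              else if (n:ℕ) < (m:ℕ) then -1 else 0) * r ^ (m:ℕ)) := by
        intro m
        rw [hA n m]
        rcases Nat.lt_trichotomy (m:ℕ) (n:ℕ) with hlt | heq | hgt
        · have hpos : (0:ℝ) < (((n:ℕ):ℝ) + 1) - (((m:ℕ):ℝ) + 1) := by
            have : ((m:ℕ):ℝ) < ((n:ℕ):ℝ) := by exact_mod_cast hlt
            linarith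
          rw [Real.sign_of_pos hpos, if_pos hlt]
          push_cast; ring
        · rw [heq, sub_self, Real.sign_zero, if_neg (by omega), if_neg (by omega)]
          push_cast; ring
        · have hneg : (((n:ℕ):ℝ) + 1) - (((m:ℕ):ℝ) + 1) < 0 := by
            have : ((n:ℕ):ℝ) < ((m:ℕ):ℝ) := by exact_mod_cast hgt
            linarith
          rw [Real.sign_of_neg hneg, if_neg (by omega), if_pos hgt]
          push_cast; ring
      have hsum : A.mulVec (fun m => r ^ (m:ℕ)) n
          = (Complex.I/2) * ∑ j ∈ Finset.range N,
              (if j < (n:ℕ) then (1:ℂ) else if (n:ℕ) < j then -1 else 0) * r ^ j := by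
        rw [Matrix.mulVec]
        simp only [dotProduct]
        rw [Finset.sum_congr rfl (fun m _ => hterm m), ← Finset.mul_sum]
        congr 1
        exact Fin.sum_univ_eq_sum_range
          (fun j => (if j < (n:ℕ) then (1:ℂ) else if (n:ℕ) < j then -1 else 0) * r ^ j) N
      rw [hsum, lattice_eig_sum (θ k) r N (n:ℕ) n.isLt hs hr1 hrN hkey]
      simp [hzdef]
  constructor
  · ext z
    simp only [Set.mem_setOf_eq, Set.mem_range]
    constructor
    · rintro ⟨ψ, hψ0, hψ⟩
      by_contra hznot
      push_neg at hznot
      choose v hv0 hveq using hmem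
      set f : Module.End ℂ (Fin N → ℂ) := Matrix.mulVecLin A with hfdef
      have hEig : ∀ k : Fin N, f.HasEigenvector ((zfun k : ℝ) : ℂ) (v k) := fun k =>
        Module.End.hasEigenvector_iff.mpr
          ⟨Module.End.mem_eigenspace_iff.mpr
            (by simpa [hfdef, Matrix.mulVecLin_apply] using hveq k), hv0 k⟩
      have hEigz : f.HasEigenvector z ψ :=
        Module.End.hasEigenvector_iff.mpr
          ⟨Module.End.mem_eigenspace_iff.mpr
            (by simpa [hfdef, Matrix.mulVecLin_apply] using hψ), hψ0⟩
      set μ : Option (Fin N) → ℂ := fun o => o.elim z (fun k => ((zfun k : ℝ) : ℂ)) with hμdef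
      have hμinj : Function.Injective μ := by
        rintro (_ | j) (_ | k) hab
        · rfl
        · exact absurd hab.symm (fun h => hznot k h)
        · exact absurd hab (fun h => hznot j h)
        · have : zfun j = zfun k := by
            have := hab
            simp only [hμdef, Option.elim] at this
            exact_mod_cast this
          rw [hinj this]
      set w : Option (Fin N) → (Fin N → ℂ) := fun o => o.elim ψ v with hwdef
      have hw : ∀ o, f.HasEigenvector (μ o) (w o) := by
        rintro (_ | k)
        · exact hEigz
        · exact hEig k
      have hLI : LinearIndependent ℂ w := f.eigenvectors_linearIndependent' μ hμinj w hw
      have hcard := hLI.fintype_card_le_finrank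
      rw [Module.finrank_fintype_fun_eq_card] at hcard
      simp [Fintype.card_option] at hcard
    · rintro ⟨k, rfl⟩
      exact hmem k
  · exact hinj
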